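/- Let m be a multiset of natural numbers of cardinality n ≥ 1 with (card m) − (sum of the entries of m) = 1. Then n times the number of well-formed expressions whose underlying multiset is m equals the total number of lists whose underlying multiset is m; equivalently, the probability that a uniformly random arrangement of m is a well-formed expression is 1/n. -/

import Mathlib

/-- `C v` is the length of `v` minus the sum of its entries. -/
def C (v : List ℕ) : ℤ := (v.length : ℤ) - (v.sum : ℤ)

/-- A list of natural numbers is a well-formed expression (Polish notation
encoding of an ordered rooted tree by outdegrees) if it is of the form
`d :: (w₁ ++ ⋯ ++ w_d)` where each `wᵢ` is a well-formed expression. -/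
inductive IsWF : List ℕ → Prop
  | node (d : ℕ) (ws : List (List ℕ)) (hlen : ws.length = d)
      (h : ∀ w ∈ ws, IsWF w) : IsWF (d :: ws.flatten)

/-- The `k`-rotation of `s = u ++ v` with `v` of length `k` is `v ++ u`. -/
def krot (k : ℕ) (s : List ℕ) : List ℕ :=
  s.drop (s.length - k) ++ s.take (s.length - k)

lemma C_nil : C [] = 0 := by simp [C]

lemma C_append (a b : List ℕ) : C (a ++ b) = C a + C b := by simp [C]; ring

lemma C_cons (a : ℕ) (l : List ℕ) : C (a :: l) = 1 - a + C l := by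
  simp [C]; push_cast; ring

lemma C_perm {a b : List ℕ} (h : a.Perm b) : C a = C b := by
  simp [C, h.length_eq, h.sum_eq]

lemma C_flatten (ws : List (List ℕ)) : C ws.flatten = (ws.map C).sum := by
  induction ws with
  | nil => simp [C_nil]
  | cons w ws ih => simp [List.flatten_cons, C_append, ih]

lemma wf_C {w : List ℕ} (h : IsWF w) : C w = 1 := by
  induction h with
  | node d ws hlen h ih =>
    rw [C_cons, C_flatten]
    have : (ws.map C).sum = (ws.map C).length • (1 : ℤ) := by
      apply List.sum_eq_card_nsmul
      intro x hx
      obtain ⟨w, hw, rfl⟩ := List.mem_map.1 hx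
      exact ih w hw
    rw [this]
    simp [hlen]

lemma wf_ne_nil {w : List ℕ} (h : IsWF w) : w ≠ [] := by
  cases h; simp

-- prefix bound for flatten of WF lists
lemma flatten_prefix (ws : List (List ℕ)) (h1 : ∀ w ∈ ws, C w = 1)
    (h2 : ∀ w ∈ ws, ∀ j < w.length, C (w.take j) ≤ 0) :
    ∀ r < ws.flatten.length, C (ws.flatten.take r) ≤ (ws.length : ℤ) - 1 := by
  induction ws with
  | nil => simp
  | cons w ws ih =>
    intro r hr
    rw [List.flatten_cons] at hr ⊢
    rcases lt_or_ge r w.length with hcase | hcase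
    · rw [List.take_append_of_le_length hcase.le]
      have := h2 w (by simp) r hcase
      simp only [List.length_cons]
      push_cast
      linarith
    · have hr' : r - w.length < ws.flatten.length := by
        rw [List.length_append] at hr; omega
      have : (w ++ ws.flatten).take r = w ++ ws.flatten.take (r - w.length) := by
        have : r = w.length + (r - w.length) := by omega
        rw [this, List.take_add, List.take_append_of_le_length le_rfl,
          List.take_length, List.drop_append_of_le_length le_rfl, List.drop_length]
        simp
      rw [this, C_append, h1 w (by simp)]
      have := ih (fun x hx => h1 x (by simp [hx])) (fun x hx => h2 x (by simp [hx]))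
        (r - w.length) hr'
      simp only [List.length_cons]
      push_cast
      linarith

lemma wf_prefix {w : List ℕ} (h : IsWF w) : ∀ j < w.length, C (w.take j) ≤ 0 := by
  induction h with
  | node d ws hlen h ih =>
    intro j hj
    match j with
    | 0 => simp [C_nil]
    | r + 1 =>
      rw [List.take_succ_cons, C_cons]
      have hr : r < ws.flatten.length := by simpa using hj
      have := flatten_prefix ws (fun x hx => wf_C (h x hx)) ih r hr
      rw [hlen] at this
      linarith

lemma C_take_succ_le (l : List ℕ) (j : ℕ) : C (l.take (j+1)) ≤ C (l.take j) + 1 := by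
  rw [List.take_succ]
  cases h : l[j]? with
  | none => simp [C_nil, C_append]
  | some a =>
    rw [C_append]
    have : C [a] = 1 - a := by simp [C]
    simp only [Option.toList_some, this]
    have : (0:ℤ) ≤ a := Int.ofNat_nonneg a
    linarith

lemma decompose : ∀ (N : ℕ) (v : List ℕ), v.length ≤ N → ∀ t : ℕ, C v = t →
    (∀ j < v.length, C (v.take j) ≤ (t:ℤ) - 1) →
    ∃ ws : List (List ℕ), ws.length = t ∧ v = ws.flatten ∧ ∀ w ∈ ws, IsWF w := by
  intro N
  induction N with
  | zero =>
    intro v hv t ht _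
    have : v = [] := List.length_eq_zero_iff.1 (by omega)
    subst this
    have : t = 0 := by rw [C_nil] at ht; exact_mod_cast ht.symm
    exact ⟨[], by simp [this]⟩
  | succ N ihN =>
    intro v hv t ht hpre
    match t with
    | 0 =>
      have hvnil : v = [] := by
        by_contra hne
        have h0 : 0 < v.length := List.length_pos_iff.2 hne
        have := hpre 0 h0
        simp [C_nil] at this
      subst hvnil
      exact ⟨[], by simp⟩
    | t + 1 =>
      have hvne : v ≠ [] := by
        intro h; subst h; rw [C_nil] at ht; omega
      obtain ⟨a, v', rfl⟩ : ∃ a v', v = a :: v' := by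
        cases v with
        | nil => exact absurd rfl hvne
        | cons a v' => exact ⟨a, v', rfl⟩
      classical
      have hex : ∃ j, 1 ≤ C ((a :: v').take j) :=
        ⟨(a :: v').length, by rw [List.take_length, ht]; push_cast; omega⟩
      obtain ⟨j₁, hspec, hmin', hj₁le⟩ :
          ∃ j₁, 1 ≤ C ((a :: v').take j₁) ∧ (∀ j < j₁, ¬ 1 ≤ C ((a :: v').take j))
            ∧ j₁ ≤ (a :: v').length :=
        ⟨Nat.find hex, Nat.find_spec hex, fun j hj => Nat.find_min hex hj,
          Nat.find_min' hex (by rw [List.take_length, ht]; push_cast; omega)⟩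
      have hmin : ∀ j < j₁, C ((a :: v').take j) ≤ 0 := fun j hj => by
        have := hmin' j hj; omega
      have hj₁pos : 1 ≤ j₁ := by
        by_contra h
        have h0 : j₁ = 0 := by omega
        rw [h0] at hspec; simp [C_nil] at hspec
      obtain ⟨j', rfl⟩ : ∃ j', j₁ = j' + 1 := ⟨j₁ - 1, by omega⟩
      have hCw1 : C ((a :: v').take (j' + 1)) = 1 := by
        have h1 := C_take_succ_le (a :: v') j'
        have h2 : C ((a :: v').take j') ≤ 0 := hmin _ (by omega)
        omega
      simp only [List.length_cons] at hj₁le hv hpre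
      have htake : (a :: v').take (j' + 1) = a :: v'.take j' := List.take_succ_cons
      -- first block is WF
      have hulen : (v'.take j').length ≤ N := by
        have := List.length_take_le j' v'
        omega
      have hCu : C (v'.take j') = (a : ℤ) := by
        rw [htake, C_cons] at hCw1; linarith
      have hupre : ∀ j < (v'.take j').length, C ((v'.take j').take j) ≤ (a:ℤ) - 1 := by
        intro j hj
        have hjlt : j + 1 < j' + 1 := by
          have := List.length_take_le j' v'
          omega
        have hm := hmin (j+1) hjlt
        rw [List.take_succ_cons, C_cons] at hm
        have htt : (v'.take j').take j = v'.take j := by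
          rw [List.take_take]
          congr 1
          omega
        rw [htt]
        linarith
      obtain ⟨ws₁, hws₁len, hws₁eq, hws₁wf⟩ := ihN (v'.take j') hulen a hCu hupre
      have hwf1 : IsWF ((a :: v').take (j' + 1)) := by
        rw [htake, hws₁eq]
        exact IsWF.node a ws₁ hws₁len hws₁wf
      -- second part
      have hv₂len : ((a :: v').drop (j' + 1)).length ≤ N := by
        rw [List.length_drop]
        simp only [List.length_cons]
        omega
      have hsplit : (a :: v').take (j' + 1) ++ (a :: v').drop (j' + 1) = a :: v' :=
        List.take_append_drop _ _
      have hCv₂ : C ((a :: v').drop (j' + 1)) = (t : ℤ) := by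
        have h := C_append ((a :: v').take (j' + 1)) ((a :: v').drop (j' + 1))
        rw [hsplit, ht, hCw1] at h
        push_cast at h ⊢
        linarith
      have hv₂pre : ∀ j < ((a :: v').drop (j' + 1)).length,
          C (((a :: v').drop (j' + 1)).take j) ≤ (t:ℤ) - 1 := by
        intro j hj
        rw [List.length_drop] at hj
        have hlt : (j' + 1) + j < v'.length + 1 := by
          simp only [List.length_cons] at hj
          omega
        have h := hpre ((j' + 1) + j) hlt
        rw [List.take_add, C_append, hCw1] at h
        push_cast at h ⊢
        linarith
      obtain ⟨ws₂, hws₂len, hws₂eq, hws₂wf⟩ := ihN _ hv₂len t hCv₂ hv₂pre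
      refine ⟨(a :: v').take (j' + 1) :: ws₂, by simp [hws₂len], ?_, ?_⟩
      · rw [List.flatten_cons, ← hws₂eq, hsplit]
      · intro w hw
        rcases List.mem_cons.1 hw with rfl | hw
        · exact hwf1
        · exact hws₂wf w hw

lemma wf_iff (v : List ℕ) : IsWF v ↔ C v = 1 ∧ ∀ j < v.length, C (v.take j) ≤ 0 := by
  constructor
  · exact fun h => ⟨wf_C h, wf_prefix h⟩
  · rintro ⟨h1, h2⟩
    have hne : v ≠ [] := by rintro rfl; rw [C_nil] at h1; omega
    obtain ⟨a, v', rfl⟩ : ∃ a v', v = a :: v' := by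
      cases v with
      | nil => exact absurd rfl hne
      | cons a v' => exact ⟨a, v', rfl⟩
    have hCu : C v' = (a : ℤ) := by rw [C_cons] at h1; linarith
    have hpre : ∀ j < v'.length, C (v'.take j) ≤ (a:ℤ) - 1 := by
      intro j hj
      have := h2 (j+1) (by simp only [List.length_cons]; omega)
      rw [List.take_succ_cons, C_cons] at this
      linarith
    obtain ⟨ws, hlen, heq, hwf⟩ := decompose v'.length v' le_rfl a hCu hpre
    rw [heq]
    exact IsWF.node a ws hlen hwf

-- prefix sums of rotations
lemma C_drop (s : List ℕ) (j : ℕ) : C (s.drop j) = C s - C (s.take j) := by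
  have := C_append (s.take j) (s.drop j)
  rw [List.take_append_drop] at this
  linarith

lemma C_rotate (s : List ℕ) (j : ℕ) : C (s.rotate j) = C s :=
  C_perm (List.rotate_perm s j)

lemma rot_take_low (s : List ℕ) (j p : ℕ) (hj : j ≤ s.length) (hp : p ≤ s.length - j) :
    C ((s.rotate j).take p) = C (s.take (j + p)) - C (s.take j) := by
  rw [List.rotate_eq_drop_append_take hj]
  rw [List.take_append_of_le_length (by rw [List.length_drop]; omega)]
  have h := C_append (s.take j) ((s.drop j).take p)
  rw [← List.take_add] at h
  linarith

lemma rot_take_high (s : List ℕ) (j p : ℕ) (hj : j ≤ s.length) (hp1 : s.length - j ≤ p)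
    (hp2 : p ≤ s.length) :
    C ((s.rotate j).take p) = C s - C (s.take j) + C (s.take (p - (s.length - j))) := by
  rw [List.rotate_eq_drop_append_take hj]
  have hlen : (s.drop j).length = s.length - j := List.length_drop
  have : p = (s.drop j).length + (p - (s.length - j)) := by omega
  rw [this, List.take_length_add_append, C_append, C_drop, List.take_take]
  have : min (p - (s.length - j)) j = p - (s.length - j) := by omega
  rw [this, hlen]
  have harg : s.length - j + (p - (s.length - j)) - (s.length - j) = p - (s.length - j) := by
    omega
  rw [harg]

-- translation: WF-ness of rotation in terms of prefix sums of s
lemma rot_wf_iff (s : List ℕ) (hC : C s = 1) (j : ℕ) (hj : j < s.length) :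
    IsWF (s.rotate j) ↔
      (∀ t < s.length, C (s.take t) ≤ C (s.take j)) ∧
      (∀ r < j, C (s.take r) < C (s.take j)) := by
  have hn : s.length ≠ 0 := by intro h; rw [List.length_eq_zero_iff.1 h] at hj; simp at hj
  have hrotlen : (s.rotate j).length = s.length := List.length_rotate s j
  have hrotC : C (s.rotate j) = 1 := by rw [C_rotate, hC]
  rw [wf_iff]
  constructor
  · rintro ⟨-, h2⟩
    -- first: S j ≥ 1 when j ≥ 1 : via prefix at p = len - j (< len since j ≥ 1)
    have hSj1 : 1 ≤ j → 1 ≤ C (s.take j) := by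
      intro hj1
      have hp : s.length - j < s.length := by omega
      have := h2 (s.length - j) (by omega)
      rw [rot_take_low s j _ hj.le le_rfl] at this
      have hjj : j + (s.length - j) = s.length := by omega
      rw [hjj, List.take_length, hC] at this
      linarith
    constructor
    · intro t ht
      rcases le_or_gt j t with hcase | hcase
      · -- t ∈ [j, len): use low with p = t - j < len
        have := h2 (t - j) (by omega)
        rw [rot_take_low s j _ hj.le (by omega)] at this
        have : C (s.take (j + (t - j))) - C (s.take j) ≤ 0 := this
        have hjj : j + (t - j) = t := by omega
        rw [hjj] at this
        linarith
      · -- t < j: use high with p = len - j + t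
        have hp1 : s.length - j ≤ s.length - j + t := by omega
        have hplt : s.length - j + t < s.length := by omega
        have := h2 (s.length - j + t) (by omega)
        rw [rot_take_high s j _ hj.le hp1 (by omega)] at this
        have hjj : s.length - j + t - (s.length - j) = t := by omega
        rw [hjj, hC] at this
        have h1j := hSj1 (by omega)
        linarith
    · intro r hr
      have hp1 : s.length - j ≤ s.length - j + r := by omega
      have hplt : s.length - j + r < s.length := by omega
      have := h2 (s.length - j + r) (by omega)
      rw [rot_take_high s j _ hj.le hp1 (by omega)] at this
      have hjj : s.length - j + r - (s.length - j) = r := by omega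
      rw [hjj, hC] at this
      linarith
  · rintro ⟨hmax, hstrict⟩
    refine ⟨hrotC, ?_⟩
    intro p hp
    rw [hrotlen] at hp
    rcases le_or_gt p (s.length - j) with hcase | hcase
    · rw [rot_take_low s j p hj.le hcase]
      rcases lt_or_ge (j + p) s.length with h' | h'
      · have := hmax (j + p) h'
        linarith
      · have hjp : j + p = s.length := by omega
        -- then p = len - j, and since p < len, j ≥ 1, so S j ≥ 1... need S j ≥ S len = 1
        have hj1 : 1 ≤ j := by omega
        have h0 : C (s.take 0) < C (s.take j) := hstrict 0 (by omega)
        rw [List.take_zero, C_nil] at h0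
        rw [hjp, List.take_length, hC]
        omega
    · rw [rot_take_high s j p hj.le hcase.le hp.le, hC]
      have hr : p - (s.length - j) < j := by omega
      have := hstrict _ hr
      linarith

-- the cycle lemma
lemma cycle (s : List ℕ) (hC : C s = 1) : ∃! j, j < s.length ∧ IsWF (s.rotate j) := by
  have hn : 1 ≤ s.length := by
    rcases Nat.eq_zero_or_pos s.length with h | h
    · rw [List.length_eq_zero_iff.1 h, C_nil] at hC; omega
    · exact h
  classical
  have hexP : ∃ j, j < s.length ∧ ∀ t < s.length, C (s.take t) ≤ C (s.take j) := by
    obtain ⟨x, hx, hmax⟩ := Finset.exists_max_image (Finset.range s.length)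
      (fun t => C (s.take t)) ⟨0, by simp; omega⟩
    exact ⟨x, Finset.mem_range.1 hx, fun t ht => hmax t (Finset.mem_range.2 ht)⟩
  set j₀ := Nat.find hexP with hj₀
  obtain ⟨hj₀lt, hj₀max⟩ := Nat.find_spec hexP
  have hj₀min : ∀ r < j₀, C (s.take r) < C (s.take j₀) := by
    intro r hr
    have hnot := Nat.find_min hexP hr
    push_neg at hnot
    obtain ⟨t, ht, hgt⟩ := hnot (by omega)
    exact lt_of_lt_of_le hgt (hj₀max t ht)
  refine ⟨j₀, ⟨hj₀lt, (rot_wf_iff s hC j₀ hj₀lt).2 ⟨hj₀max, hj₀min⟩⟩, ?_⟩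
  rintro j ⟨hjlt, hwf⟩
  obtain ⟨hmax, hstrict⟩ := (rot_wf_iff s hC j hjlt).1 hwf
  have h1 : j₀ ≤ j := Nat.find_min' hexP ⟨hjlt, hmax⟩
  rcases eq_or_lt_of_le h1 with h | h
  · omega
  · exact absurd (hj₀max j hjlt) (not_le.2 (hstrict j₀ h))

lemma krot_eq_rotate (k : ℕ) (s : List ℕ) : krot k s = s.rotate (s.length - k) :=
  (List.rotate_eq_drop_append_take (Nat.sub_le _ _)).symm

theorem stmt_11 (m : Multiset ℕ) (n : ℕ) (hn : Multiset.card m = n) (hn1 : 1 ≤ n)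
    (hC : (Multiset.card m : ℤ) - (m.sum : ℤ) = 1) :
    n * {w : List ℕ | (↑w : Multiset ℕ) = m ∧ IsWF w}.ncard
      = {s : List ℕ | (↑s : Multiset ℕ) = m}.ncard := by
  classical
  have hlen : ∀ s : List ℕ, (↑s : Multiset ℕ) = m → s.length = n := by
    intro s hs
    have := Multiset.coe_card s
    rw [hs, hn] at this
    omega
  have hCs : ∀ s : List ℕ, (↑s : Multiset ℕ) = m → C s = 1 := by
    intro s hs
    have h1 := Multiset.coe_card s
    have h2 : (↑s : Multiset ℕ).sum = s.sum := Multiset.sum_coe s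
    rw [hs] at h1 h2
    unfold C
    rw [← h1, ← h2]
    exact hC
  -- the bijection
  have key : ∀ (k : ℕ) (w : List ℕ), k < n → (↑w : Multiset ℕ) = m →
      (↑(krot k w) : Multiset ℕ) = m ∧ krot k w = w.rotate (n - k) := by
    intro k w hk hw
    have hperm : (krot k w).Perm w := by
      rw [krot_eq_rotate]
      exact List.rotate_perm w _
    constructor
    · rw [← hw]
      exact Multiset.coe_eq_coe.2 hperm
    · rw [krot_eq_rotate, hlen w hw]
  let f : Fin n × {w : List ℕ // (↑w : Multiset ℕ) = m ∧ IsWF w} →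
      {s : List ℕ // (↑s : Multiset ℕ) = m} :=
    fun p => ⟨krot p.1 p.2.1, ((key p.1 p.2.1 p.1.2 p.2.2.1).1)⟩
  have recover : ∀ (k : ℕ) (w : List ℕ), k < n → (↑w : Multiset ℕ) = m →
      (krot k w).rotate k = w := by
    intro k w hk hw
    rw [(key k w hk hw).2, List.rotate_rotate]
    have : n - k + k = n := by omega
    rw [this, ← hlen w hw, List.rotate_length]
  have hbij : Function.Bijective f := by
    constructor
    · rintro ⟨k, w, hwm, hwwf⟩ ⟨k', w', hwm', hwwf'⟩ heq
      simp only [f, Subtype.mk.injEq] at heq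
      have hsm : (↑(krot (k:ℕ) w) : Multiset ℕ) = m := (key k w k.2 hwm).1
      have hw : (krot (k:ℕ) w).rotate k = w := recover k w k.2 hwm
      have hw' : (krot (k:ℕ) w).rotate k' = w' := by
        rw [heq]; exact recover k' w' k'.2 hwm'
      have hCs1 : C (krot (k:ℕ) w) = 1 := hCs _ hsm
      obtain ⟨j, -, huniq⟩ := cycle _ hCs1
      have hslen : (krot (k:ℕ) w).length = n := hlen _ hsm
      have e1 : (k : ℕ) = j := huniq k ⟨by omega, by rw [hw]; exact hwwf⟩
      have e2 : (k' : ℕ) = j := huniq k' ⟨by omega, by rw [hw']; exact hwwf'⟩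
      have ekk : (k : ℕ) = (k' : ℕ) := by omega
      have eww : w = w' := by rw [← hw, ← hw', ekk]
      simp only [Prod.mk.injEq, Subtype.mk.injEq]
      exact ⟨Fin.ext ekk, eww⟩
    · rintro ⟨s, hs⟩
      obtain ⟨j, ⟨hj, hwf⟩, -⟩ := cycle s (hCs s hs)
      have hslen : s.length = n := hlen s hs
      have hjn : j < n := by omega
      have hwm : (↑(s.rotate j) : Multiset ℕ) = m := by
        rw [← hs]
        exact Multiset.coe_eq_coe.2 (List.rotate_perm s j)
      refine ⟨⟨⟨j, hjn⟩, ⟨s.rotate j, hwm, hwf⟩⟩, ?_⟩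
      simp only [f, Subtype.mk.injEq]
      rw [(key j (s.rotate j) hjn hwm).2, List.rotate_rotate]
      have : j + (n - j) = n := by omega
      rw [this, ← hslen, List.rotate_length]
  have hcard := Nat.card_eq_of_bijective f hbij
  rw [Nat.card_prod, Nat.card_eq_fintype_card, Fintype.card_fin] at hcard
  rw [← Nat.card_coe_set_eq, ← Nat.card_coe_set_eq]
  exact hcard
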